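/- Every infinite braidable sequence of random variables with values in a topological group G is spreadable: for any strictly increasing sequence of positive integers k₁ < k₂ < …, the sequence (ξ_{k₁}, ξ_{k₂}, …) has the same law as (ξ₁, ξ₂, …). -/

import Mathlib

open MeasureTheory

/-- The braid generator `βᵢ` acting on `n`-tuples of a group `G` (`0`-indexed):
`βᵢ • x = (…, xᵢ x_{i+1} xᵢ⁻¹, xᵢ, …)`. -/
def braidGen (n : ℕ) {G : Type*} [Group G] (i : ℕ) (x : Fin n → G) : Fin n → G :=
  fun k =>
    if _hk : (k : ℕ) = i then
      if h2 : i + 1 < n then x k * x ⟨i + 1, h2⟩ * (x k)⁻¹ else x k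
    else if _hk' : (k : ℕ) = i + 1 then x ⟨i, by have := k.isLt; omega⟩
    else x k

/-- The action of the inverse generator `βᵢ⁻¹` (the inverse map of `braidGen n i`). -/
def braidGenInv (n : ℕ) {G : Type*} [Group G] (i : ℕ) (x : Fin n → G) : Fin n → G :=
  fun k =>
    if _hk : (k : ℕ) = i then
      if h2 : i + 1 < n then x ⟨i + 1, h2⟩ else x k
    else if _hk' : (k : ℕ) = i + 1 then (x k)⁻¹ * x ⟨i, by have := k.isLt; omega⟩ * x k
    else x k

/-- The action on `Gⁿ` of a braid written as a word in the generators (`(i, true)` stands for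
`βᵢ`, `(i, false)` for `βᵢ⁻¹`), with the left-action convention `(ab) • x = a • (b • x)`. -/
def wordAction (n : ℕ) {G : Type*} [Group G] (w : List (ℕ × Bool)) :
    (Fin n → G) → Fin n → G :=
  w.foldr (fun p f => (if p.2 then braidGen n p.1 else braidGenInv n p.1) ∘ f) id

section Aux

variable {G : Type*} [Group G]

lemma wordAction_nil (n : ℕ) : wordAction (G := G) n [] = id := rfl

lemma wordAction_cons (n : ℕ) (p : ℕ × Bool) (w : List (ℕ × Bool)) (x : Fin n → G) :
    wordAction n (p :: w) x =
      (if p.2 then braidGen n p.1 else braidGenInv n p.1) (wordAction n w x) := rfl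

lemma wordAction_append (n : ℕ) (w1 w2 : List (ℕ × Bool)) (x : Fin n → G) :
    wordAction n (w1 ++ w2) x = wordAction n w1 (wordAction n w2 x) := by
  induction w1 with
  | nil => rfl
  | cons p w ih => simp [wordAction_cons, ih]

/-- Word moving the coordinate at position `m` down to position `j`. -/
def moveWord (j m : ℕ) : List (ℕ × Bool) := (List.range' j (m - j)).map (fun i => (i, false))

lemma moveWord_spec {n : ℕ} : ∀ (d j : ℕ) (x : Fin n → G),
    (∀ i : Fin n, ((i : ℕ) < j ∨ j + d < (i : ℕ)) →
      wordAction n (moveWord j (j + d)) x i = x i) ∧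
    (∀ (hj : j < n) (hm : j + d < n),
      wordAction n (moveWord j (j + d)) x ⟨j, hj⟩ = x ⟨j + d, hm⟩) := by
  intro d
  induction d with
  | zero =>
    intro j x
    have : moveWord j (j + 0) = [] := by simp [moveWord]
    rw [this]
    exact ⟨fun i _ => rfl, fun hj hm => rfl⟩
  | succ d ih =>
    intro j x
    have hmw : moveWord j (j + (d + 1)) = (j, false) :: moveWord (j + 1) (j + 1 + d) := by
      simp only [moveWord]
      have h1 : j + (d + 1) - j = d + 1 := by omega
      have h2 : j + 1 + d - (j + 1) = d := by omega
      rw [h1, h2, List.range'_succ]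
      simp
    rw [hmw]
    set y := wordAction n (moveWord (j + 1) (j + 1 + d)) x with hy
    obtain ⟨ha, hb⟩ := ih (j + 1) x
    have hact : ∀ i : Fin n, wordAction n ((j, false) :: moveWord (j + 1) (j + 1 + d)) x i
        = braidGenInv n j y i := by
      intro i; rw [wordAction_cons]; simp [hy]
    constructor
    · intro i hi
      rw [hact]
      unfold braidGenInv
      have h1 : (i : ℕ) ≠ j := by omega
      have h2 : (i : ℕ) ≠ j + 1 := by omega
      rw [dif_neg h1, dif_neg h2]
      exact ha i (by omega)
    · intro hj hm
      rw [hact]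
      unfold braidGenInv
      have h2 : j + 1 < n := by omega
      rw [dif_pos rfl, dif_pos h2]
      have := hb h2 (by omega : j + 1 + d < n)
      have hyv : y ⟨j + 1, h2⟩ = x ⟨j + 1 + d, by omega⟩ := this
      rw [hyv]
      exact congrArg x (Fin.ext (show j + 1 + d = j + (d + 1) by omega))

lemma moveWord_spec' {n : ℕ} (j m : ℕ) (hjm : j ≤ m) (x : Fin n → G) :
    (∀ i : Fin n, ((i : ℕ) < j ∨ m < (i : ℕ)) → wordAction n (moveWord j m) x i = x i) ∧
    (∀ (hj : j < n) (hm : m < n), wordAction n (moveWord j m) x ⟨j, hj⟩ = x ⟨m, hm⟩) := by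
  obtain ⟨d, rfl⟩ : ∃ d, m = j + d := ⟨m - j, by omega⟩
  exact moveWord_spec d j x

lemma mem_moveWord {j m : ℕ} {p : ℕ × Bool} (hp : p ∈ moveWord j m) : p.1 < m := by
  simp only [moveWord, List.mem_map, List.mem_range'] at hp
  obtain ⟨i, ⟨hi, rfl⟩⟩ := hp
  omega

/-- Word bringing `(x_{k 0}, …, x_{k (n-1)})` to the first `n` positions. -/
def bigWord (k : ℕ → ℕ) : ℕ → List (ℕ × Bool)
  | 0 => []
  | n + 1 => moveWord n (k n) ++ bigWord k n

lemma mem_bigWord {k : ℕ → ℕ} {n : ℕ} {p : ℕ × Bool} (hp : p ∈ bigWord k n) :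
    ∃ j < n, p.1 < k j := by
  induction n with
  | zero => simp [bigWord] at hp
  | succ n ih =>
    simp only [bigWord, List.mem_append] at hp
    rcases hp with hp | hp
    · exact ⟨n, Nat.lt_succ_self n, mem_moveWord hp⟩
    · obtain ⟨j, hj, h⟩ := ih hp
      exact ⟨j, by omega, h⟩

lemma bigWord_spec {k : ℕ → ℕ} (hk : StrictMono k) {N : ℕ} (n : ℕ)
    (hN : ∀ j < n, k j < N) (x : Fin N → G) :
    (∀ (i : Fin N) (hi : (i : ℕ) < n),
      wordAction N (bigWord k n) x i = x ⟨k i, hN i hi⟩) ∧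
    (∀ i : Fin N, (∀ j < n, k j < (i : ℕ)) → wordAction N (bigWord k n) x i = x i) := by
  induction n with
  | zero => exact ⟨fun i hi => absurd hi (by omega), fun i _ => rfl⟩
  | succ n ih =>
    have hN' : ∀ j < n, k j < N := fun j hj => hN j (by omega)
    obtain ⟨ih1, ih2⟩ := ih hN'
    have hact : ∀ i : Fin N, wordAction N (bigWord k (n + 1)) x i
        = wordAction N (moveWord n (k n)) (wordAction N (bigWord k n) x) i := by
      intro i
      rw [show bigWord k (n + 1) = moveWord n (k n) ++ bigWord k n from rfl,
        wordAction_append]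
    set y := wordAction N (bigWord k n) x with hy
    have hnk : n ≤ k n := hk.le_apply
    obtain ⟨ma, mb⟩ := moveWord_spec' (n := N) n (k n) hnk y
    constructor
    · intro i hi
      rw [hact]
      rcases Nat.lt_or_ge (i : ℕ) n with h | h
      · rw [ma i (Or.inl h)]
        exact ih1 i h
      · have hin : (i : ℕ) = n := by omega
        have hnN : n < N := by have := i.isLt; omega
        have hknN : k n < N := hN n (by omega)
        have e1 : wordAction N (moveWord n (k n)) y i
            = wordAction N (moveWord n (k n)) y ⟨n, hnN⟩ :=
          congrArg _ (Fin.ext hin)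
        have e3 : y ⟨k n, hknN⟩ = x ⟨k n, hknN⟩ :=
          ih2 ⟨k n, hknN⟩ (fun j hj => hk (show j < n by omega))
        rw [e1, mb hnN hknN, e3]
        exact congrArg x (Fin.ext (congrArg k hin.symm))
    · intro i hi
      rw [hact]
      have h1 : k n < (i : ℕ) := hi n (by omega)
      rw [ma i (Or.inr h1)]
      exact ih2 i (fun j hj => hi j (by omega))

end Aux

/-- **Braidable implies spreadable.**  Let `ξ = (ξᵢ)_{i≥0}` be an infinite sequence of
`G`-valued random variables that is braidable: for every `n` and every braid `β ∈ Bₙ` (given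
by a word in the generators), `β • (ξ₀,…,ξ_{n−1})` has the same law as `(ξ₀,…,ξ_{n−1})`.
Then `ξ` is spreadable: for every strictly increasing sequence `k` of indices,
`(ξ_{k₀}, ξ_{k₁}, …)` has the same law as `(ξ₀, ξ₁, …)`. -/
theorem braidable_implies_spreadable {G : Type*} [Group G] [TopologicalSpace G]
    [IsTopologicalGroup G] [MeasurableSpace G] [BorelSpace G]
    {Ω : Type*} [MeasurableSpace Ω] (P : Measure Ω) [IsProbabilityMeasure P]
    (ξ : ℕ → Ω → G) (hmeas : ∀ i, Measurable (ξ i))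
    (hbraid : ∀ (n : ℕ) (w : List (ℕ × Bool)), (∀ p ∈ w, p.1 + 1 < n) →
      P.map (fun ω => wordAction n w (fun i : Fin n => ξ i ω)) =
        P.map (fun ω => fun i : Fin n => ξ i ω)) :
    ∀ k : ℕ → ℕ, StrictMono k →
      P.map (fun ω => fun i : ℕ => ξ (k i) ω) = P.map (fun ω => fun i : ℕ => ξ i ω) := by
  intro k hk
  -- finite dimensional marginals agree
  have findim : ∀ n : ℕ,
      P.map (fun ω => fun i : Fin n => ξ (k i) ω) =
        P.map (fun ω => fun i : Fin n => ξ i ω) := by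
    intro n
    set N := k n + 1 with hNdef
    have hN : ∀ j < n, k j < N := fun j hj => by
      have := hk (show j < n from hj); omega
    have hbound : ∀ p ∈ bigWord k n, p.1 + 1 < N := by
      intro p hp
      obtain ⟨j, hj, h⟩ := mem_bigWord hp
      have := hN j hj
      omega
    have key := hbraid N (bigWord k n) hbound
    have hnN : n < N := by have := hk.le_apply (x := n); omega
    set proj : (Fin N → G) → Fin n → G := fun f i => f ⟨i, by have := i.isLt; omega⟩
      with hproj
    have hprojm : Measurable proj :=
      measurable_pi_lambda _ (fun i => measurable_pi_apply _)
    have hT : Measurable (fun ω => fun i : Fin N => ξ i ω) :=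
      measurable_pi_lambda _ (fun i => hmeas i)
    haveI : IsProbabilityMeasure (P.map (fun ω => fun i : Fin N => ξ i ω)) :=
      Measure.isProbabilityMeasure_map hT.aemeasurable
    have hW : AEMeasurable (fun ω => wordAction N (bigWord k n) (fun i : Fin N => ξ i ω)) P := by
      by_contra h
      rw [Measure.map_of_not_aemeasurable h] at key
      have h1 : (0 : Measure (Fin N → G)) Set.univ = 1 := by
        rw [key]; exact measure_univ
      simp at h1
    have lhs_eq : (fun ω => fun i : Fin n => ξ (k i) ω) =
        proj ∘ (fun ω => wordAction N (bigWord k n) (fun i : Fin N => ξ i ω)) := by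
      funext ω
      funext i
      have := (bigWord_spec hk n hN (fun j : Fin N => ξ j ω)).1
        ⟨i, by have := i.isLt; omega⟩ i.isLt
      simp only [Function.comp_apply, hproj]
      rw [this]
    have rhs_eq : (fun ω => fun i : Fin n => ξ i ω) =
        proj ∘ (fun ω => fun i : Fin N => ξ i ω) := rfl
    rw [lhs_eq, rhs_eq, ← AEMeasurable.map_map_of_aemeasurable hprojm.aemeasurable hW,
      ← Measure.map_map hprojm hT, key]
  -- lift to ℕ → G via uniqueness of projective limits
  set μ := P.map (fun ω => fun i : ℕ => ξ (k i) ω) with hμ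
  set ν := P.map (fun ω => fun i : ℕ => ξ i ω) with hν
  have hS : Measurable (fun ω => fun i : ℕ => ξ (k i) ω) :=
    measurable_pi_lambda _ (fun i => hmeas (k i))
  have hT : Measurable (fun ω => fun i : ℕ => ξ i ω) :=
    measurable_pi_lambda _ (fun i => hmeas i)
  -- marginals on Fin n agree
  have hfin : ∀ n : ℕ, μ.map (fun f : ℕ → G => fun i : Fin n => f i) =
      ν.map (fun f : ℕ → G => fun i : Fin n => f i) := by
    intro n
    have hp : Measurable (fun f : ℕ → G => fun i : Fin n => f i) :=
      measurable_pi_lambda _ (fun i => measurable_pi_apply _)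
    rw [hμ, hν, Measure.map_map hp hS, Measure.map_map hp hT]
    exact findim n
  set Pfam : ∀ J : Finset ℕ, Measure (∀ _ : J, G) := fun J => ν.map J.restrict with hPfam
  haveI : IsProbabilityMeasure ν := Measure.isProbabilityMeasure_map hT.aemeasurable
  haveI : ∀ J : Finset ℕ, IsFiniteMeasure (Pfam J) := by
    intro J
    have : Measurable (J.restrict (π := fun _ : ℕ => G)) :=
      measurable_pi_lambda _ (fun i => measurable_pi_apply _)
    haveI : IsProbabilityMeasure (Pfam J) := Measure.isProbabilityMeasure_map this.aemeasurable
    infer_instance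
  have hνlim : IsProjectiveLimit ν Pfam := fun J => rfl
  have hμlim : IsProjectiveLimit μ Pfam := by
    intro J
    set n := J.sup id + 1 with hn
    have hJn : ∀ j ∈ J, j < n := fun j hj => by
      have : j ≤ J.sup id := Finset.le_sup (f := id) hj
      omega
    set g : (Fin n → G) → ∀ _ : J, G := fun h j => h ⟨j.1, hJn j.1 j.2⟩ with hg
    have hgm : Measurable g := measurable_pi_lambda _ (fun j => measurable_pi_apply _)
    have hpm : Measurable (fun f : ℕ → G => fun i : Fin n => f i) :=
      measurable_pi_lambda _ (fun i => measurable_pi_apply _)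
    have hre : ∀ m : Measure (ℕ → G), m.map J.restrict =
        (m.map (fun f : ℕ → G => fun i : Fin n => f i)).map g := by
      intro m
      rw [Measure.map_map hgm hpm]
      rfl
    show μ.map J.restrict = ν.map J.restrict
    rw [hre μ, hre ν, hfin n]
  exact hμlim.unique hνlim
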